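/- Theorem 3.1 (dichotomy for online learning): Let 𝒳 be a set and ℋ a set of functions h : 𝒳 → {0,1}. (i) If ℋ does not have an infinite Littlestone tree, then there is a strategy for the learner in the online learning game that makes only finitely many mistakes against every adversary. (ii) If ℋ has an infinite Littlestone tree, then there is a strategy for the adversary that forces every learner to make a mistake in every round. In particular, ℋ is online learnable if and only if it has no infinite Littlestone tree. -/

import Mathlib

variable {𝒳 : Type*}

/-- `ℋ` has an infinite Littlestone tree: nodes are indexed by finite binary strings, and every
finite branch is consistent with some concept in `ℋ`. -/
def HasInfiniteLittlestoneTree (ℋ : Set (𝒳 → Bool)) : Prop :=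
  ∃ x : List Bool → 𝒳, ∀ (y : ℕ → Bool) (n : ℕ),
    ∃ h ∈ ℋ, ∀ k ≤ n, h (x (List.ofFn fun i : Fin k => y i)) = y k

/-- The sequence `(x_t, y_t)` is realizable by `ℋ`: every finite prefix is consistent with some
concept in `ℋ`. -/
def RealizableSeq (ℋ : Set (𝒳 → Bool)) (x : ℕ → 𝒳) (y : ℕ → Bool) : Prop :=
  ∀ T : ℕ, ∃ h ∈ ℋ, ∀ t ≤ T, h (x t) = y t

/-- The set of rounds at which a learner strategy `S` (mapping the history
`x_1,y_1,…,x_{t-1},y_{t-1}` together with the current point `x_t` to a prediction `yhat_t`)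
makes a mistake on the sequence `(x_t, y_t)`. -/
def Mistakes (S : List (𝒳 × Bool) → 𝒳 → Bool) (x : ℕ → 𝒳) (y : ℕ → Bool) : Set ℕ :=
  {t : ℕ | S (List.ofFn fun i : Fin t => (x i, y i)) (x t) ≠ y t}

/-- `ℋ` is online learnable: some learner strategy makes only finitely many mistakes on every
realizable sequence. -/
def OnlineLearnable (ℋ : Set (𝒳 → Bool)) : Prop :=
  ∃ S : List (𝒳 × Bool) → 𝒳 → Bool,
    ∀ (x : ℕ → 𝒳) (y : ℕ → Bool), RealizableSeq ℋ x y → (Mistakes S x y).Finite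

namespace OLD31

lemma ofFn_snoc {α : Type*} (f : ℕ → α) (t : ℕ) :
    (List.ofFn fun i : Fin (t + 1) => f i) = (List.ofFn fun i : Fin t => f i) ++ [f t] := by
  rw [List.ofFn_succ']
  simp [List.concat_eq_append, Fin.last]

/-- The branch restriction of a version space. -/
def Br (H : Set (𝒳 → Bool)) (a : 𝒳) (b : Bool) : Set (𝒳 → Bool) := {h | h ∈ H ∧ h a = b}

/-- Type-valued witness that `H` has no infinite Littlestone tree (a well-founded
"rank" derivation). -/
inductive NITt : Set (𝒳 → Bool) → Type _ where
  | empty (H : Set (𝒳 → Bool)) (hH : H = ∅) : NITt H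
  | node (H : Set (𝒳 → Bool)) (f : 𝒳 → Bool) (g : ∀ a : 𝒳, NITt (Br H a (f a))) : NITt H

lemma exists_wit {H : Set (𝒳 → Bool)} (hH : ¬ Nonempty (NITt H)) :
    ∃ a : 𝒳, ∀ b : Bool, ¬ Nonempty (NITt (Br H a b)) := by
  by_contra hc
  push_neg at hc
  choose f hf using hc
  exact hH ⟨NITt.node H f fun a => Classical.choice (hf a)⟩

noncomputable def theWit {H : Set (𝒳 → Bool)} (hH : ¬ Nonempty (NITt H)) : 𝒳 :=
  (exists_wit hH).choose

lemma theWit_spec {H : Set (𝒳 → Bool)} (hH : ¬ Nonempty (NITt H)) (b : Bool) :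
    ¬ Nonempty (NITt (Br H (theWit hH) b)) := (exists_wit hH).choose_spec b

noncomputable def chain :
    {H : Set (𝒳 → Bool) // ¬ Nonempty (NITt H)} → List Bool →
      {H : Set (𝒳 → Bool) // ¬ Nonempty (NITt H)}
  | V, [] => V
  | V, b :: u => chain ⟨Br V.1 (theWit V.2) b, theWit_spec V.2 b⟩ u

lemma chain_snoc (V : {H : Set (𝒳 → Bool) // ¬ Nonempty (NITt H)}) (u : List Bool) (b : Bool) :
    chain V (u ++ [b]) =
      chain ⟨Br (chain V u).1 (theWit (chain V u).2) b, theWit_spec (chain V u).2 b⟩ [] := by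
  induction u generalizing V with
  | nil => rfl
  | cons c u ih => simpa [chain] using ih ⟨Br V.1 (theWit V.2) c, theWit_spec V.2 c⟩

lemma mem_chain_prefix (V₀ : {H : Set (𝒳 → Bool) // ¬ Nonempty (NITt H)}) (y : ℕ → Bool) :
    ∀ k, ∀ h ∈ (chain V₀ (List.ofFn fun i : Fin k => y i)).1,
      h ∈ V₀.1 ∧ ∀ j < k, h (theWit (chain V₀ (List.ofFn fun i : Fin j => y i)).2) = y j := by
  intro k
  induction k with
  | zero => intro h hh; exact ⟨hh, fun j hj => absurd hj (Nat.not_lt_zero j)⟩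
  | succ k ih =>
    intro h hh
    rw [ofFn_snoc, chain_snoc] at hh
    obtain ⟨hh1, hh2⟩ := hh
    obtain ⟨hm, hcons⟩ := ih h hh1
    refine ⟨hm, fun j hj => ?_⟩
    rcases Nat.lt_succ_iff_lt_or_eq.1 hj with hj' | rfl
    · exact hcons j hj'
    · exact hh2

lemma hasTree_of_not {H : Set (𝒳 → Bool)} (hH : ¬ Nonempty (NITt H)) :
    HasInfiniteLittlestoneTree H := by
  refine ⟨fun u => theWit (chain ⟨H, hH⟩ u).2, ?_⟩
  intro y n
  have hne : (chain ⟨H, hH⟩ (List.ofFn fun i : Fin (n + 1) => y i)).1.Nonempty := by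
    rw [Set.nonempty_iff_ne_empty]
    intro he
    exact (chain ⟨H, hH⟩ (List.ofFn fun i : Fin (n + 1) => y i)).2 ⟨NITt.empty _ he⟩
  obtain ⟨h, hh⟩ := hne
  obtain ⟨hm, hcons⟩ := mem_chain_prefix ⟨H, hH⟩ y (n + 1) h hh
  exact ⟨h, hm, fun k hk => hcons k (Nat.lt_succ_of_le hk)⟩

/-! ### The learner side -/

def predSt : (Σ' H : Set (𝒳 → Bool), NITt H) → 𝒳 → Bool
  | ⟨_, .empty _ _⟩, _ => true
  | ⟨_, .node _ f _⟩, a => !(f a)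

def stepSt : (Σ' H : Set (𝒳 → Bool), NITt H) → 𝒳 × Bool → Σ' H : Set (𝒳 → Bool), NITt H
  | ⟨H, .empty _ hH⟩, _ => ⟨H, .empty _ hH⟩
  | ⟨H, .node _ f g⟩, p => if p.2 = f p.1 then ⟨_, g p.1⟩ else ⟨H, .node _ f g⟩

lemma mem_stepSt (d : Σ' H : Set (𝒳 → Bool), NITt H) (p : 𝒳 × Bool) {h : 𝒳 → Bool}
    (hm : h ∈ d.1) (hc : h p.1 = p.2) : h ∈ (stepSt d p).1 := by
  obtain ⟨H, t⟩ := d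
  cases t with
  | empty H hH => exact hm
  | node H f g =>
    by_cases hb : p.2 = f p.1
    · simp only [stepSt, hb, if_pos]
      exact ⟨hm, by rw [hc, hb]⟩
    · simp only [stepSt, hb, if_neg, not_false_iff]
      exact hm

lemma stepSt_eq_of_correct (d : Σ' H : Set (𝒳 → Bool), NITt H) (p : 𝒳 × Bool)
    (hc : predSt d p.1 = p.2) : stepSt d p = d := by
  obtain ⟨H, t⟩ := d
  cases t with
  | empty H hH => rfl
  | node H f g =>
    have : p.2 ≠ f p.1 := by
      rw [← hc]; simp [predSt]
    simp [stepSt, this]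

lemma stepSt_of_mistake (H : Set (𝒳 → Bool)) (f : 𝒳 → Bool) (g : ∀ a, NITt (Br H a (f a)))
    (p : 𝒳 × Bool) (hm : predSt ⟨H, .node H f g⟩ p.1 ≠ p.2) :
    stepSt ⟨H, .node H f g⟩ p = ⟨Br H p.1 (f p.1), g p.1⟩ := by
  have : p.2 = f p.1 := by
    simp only [predSt] at hm
    cases hb : f p.1 <;> cases hp : p.2 <;> simp_all
  simp [stepSt, this]

variable (init : Σ' H : Set (𝒳 → Bool), NITt H) (x : ℕ → 𝒳) (y : ℕ → Bool)

def stateAt (t : ℕ) : Σ' H : Set (𝒳 → Bool), NITt H :=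
  (List.ofFn fun i : Fin t => (x i, y i)).foldl stepSt init

lemma stateAt_succ (t : ℕ) :
    stateAt init x y (t + 1) = stepSt (stateAt init x y t) (x t, y t) := by
  unfold stateAt
  rw [ofFn_snoc (f := fun i => (x i, y i)), List.foldl_concat]

lemma mem_stateAt {h : 𝒳 → Bool} (hm : h ∈ init.1) :
    ∀ t, (∀ s < t, h (x s) = y s) → h ∈ (stateAt init x y t).1 := by
  intro t
  induction t with
  | zero => intro _; exact hm
  | succ t ih =>
    intro hcons
    rw [stateAt_succ]
    exact mem_stepSt _ _ (ih fun s hs => hcons s (Nat.lt_succ_of_lt hs))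
      (hcons t (Nat.lt_succ_self t))

lemma fin_aux (hne : ∀ t, (stateAt init x y t).1.Nonempty) :
    ∀ (H : Set (𝒳 → Bool)) (d : NITt H) (t₀ : ℕ),
      stateAt init x y t₀ = ⟨H, d⟩ →
      {t | t₀ ≤ t ∧ predSt (stateAt init x y t) (x t) ≠ y t}.Finite := by
  intro H d
  induction d with
  | empty H hH =>
    intro t₀ hst
    obtain ⟨h, hh⟩ := hne t₀
    have h1 : (stateAt init x y t₀).1 = H := by rw [hst]
    rw [h1, hH] at hh
    exact absurd hh (Set.notMem_empty h)
  | node H f g ih =>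
    intro t₀ hst
    by_cases hM : ∃ t, t₀ ≤ t ∧ predSt (stateAt init x y t) (x t) ≠ y t
    · classical
      set t₁ := Nat.find hM with ht₁def
      have hPt₁ := Nat.find_spec hM
      have hmin : ∀ t, t < t₁ → ¬ (t₀ ≤ t ∧ predSt (stateAt init x y t) (x t) ≠ y t) :=
        fun t ht => Nat.find_min hM ht
      have hsteady : ∀ k, t₀ + k ≤ t₁ → stateAt init x y (t₀ + k) = ⟨H, .node H f g⟩ := by
        intro k
        induction k with
        | zero => intro _; simpa using hst
        | succ k ih2 =>
          intro hk
          have hk' : t₀ + k < t₁ := by omega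
          have hnm := hmin _ hk'
          push_neg at hnm
          have hcor : predSt (stateAt init x y (t₀ + k)) (x (t₀ + k)) = y (t₀ + k) :=
            hnm (by omega)
          rw [show t₀ + (k + 1) = (t₀ + k) + 1 by omega, stateAt_succ,
            stepSt_eq_of_correct _ _ hcor]
          exact ih2 (le_of_lt hk')
      have hst1 : stateAt init x y t₁ = ⟨H, .node H f g⟩ := by
        have := hsteady (t₁ - t₀) (by omega)
        rwa [Nat.add_sub_cancel' hPt₁.1] at this
      have hmis : predSt (⟨H, .node H f g⟩ : Σ' H : Set (𝒳 → Bool), NITt H) (x t₁) ≠ y t₁ := by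
        rw [← hst1]; exact hPt₁.2
      have hst2 : stateAt init x y (t₁ + 1) = ⟨Br H (x t₁) (f (x t₁)), g (x t₁)⟩ := by
        rw [stateAt_succ, hst1]
        exact stepSt_of_mistake H f g (x t₁, y t₁) hmis
      have hfin := ih (x t₁) (t₁ + 1) hst2
      refine Set.Finite.subset (hfin.insert t₁) ?_
      rintro t ⟨ht0, hmt⟩
      have ht1le : t₁ ≤ t := by
        by_contra hlt
        exact hmin t (by omega) ⟨ht0, hmt⟩
      rcases eq_or_lt_of_le ht1le with rfl | hlt
      · exact Set.mem_insert _ _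
      · exact Set.mem_insert_of_mem _ ⟨hlt, hmt⟩
    · push_neg at hM
      convert Set.finite_empty using 1
      ext t
      simp only [Set.mem_setOf_eq, Set.mem_empty_iff_false, iff_false, not_and]
      intro ht
      exact not_not.2 (hM t ht)

end OLD31

/-! ### Running a learner against the tree adversary -/
namespace OLD31

def runSeq (S : List (𝒳 × Bool) → 𝒳 → Bool) (A : List Bool → 𝒳) :
    ℕ → List Bool × List (𝒳 × Bool)
  | 0 => ([], [])
  | t + 1 =>
    let r := runSeq S A t
    let p := S r.2 (A r.1)
    (r.1 ++ [p], r.2 ++ [(A r.1, !p)])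

def yh (S : List (𝒳 × Bool) → 𝒳 → Bool) (A : List Bool → 𝒳) (t : ℕ) : Bool :=
  S (runSeq S A t).2 (A (runSeq S A t).1)

lemma runSeq_spec (S : List (𝒳 × Bool) → 𝒳 → Bool) (A : List Bool → 𝒳) :
    ∀ t, (runSeq S A t).1 = (List.ofFn fun i : Fin t => yh S A i) ∧
      (runSeq S A t).2 = (List.ofFn fun i : Fin t =>
        (A (List.ofFn fun j : Fin (i : ℕ) => yh S A j), !(yh S A i))) := by
  intro t
  induction t with
  | zero => exact ⟨rfl, rfl⟩
  | succ t ih =>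
    obtain ⟨h1, h2⟩ := ih
    constructor
    · show (runSeq S A t).1 ++ [yh S A t] = _
      rw [h1, ofFn_snoc (f := fun i => yh S A i)]
    · show (runSeq S A t).2 ++ [(A (runSeq S A t).1, !(yh S A t))] = _
      rw [h2, h1,
        ofFn_snoc (f := fun i => (A (List.ofFn fun j : Fin i => yh S A j), !(yh S A i)))]

end OLD31

/-- **Theorem 3.1 (dichotomy for online learning).** If `ℋ` has no infinite Littlestone tree, some
learner strategy makes finitely many mistakes against every adversary; if `ℋ` has an infinite
Littlestone tree, there is an adversary strategy (choosing `x_t` from the learner's previous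
predictions and answering `y_t = ¬yhat_t`, always legally, i.e. keeping the sequence realizable)
forcing every learner to make a mistake in every round.  In particular, `ℋ` is online learnable
iff it has no infinite Littlestone tree. -/
theorem online_learning_dichotomy (ℋ : Set (𝒳 → Bool)) :
    (¬ HasInfiniteLittlestoneTree ℋ →
        ∃ S : List (𝒳 × Bool) → 𝒳 → Bool,
          ∀ (x : ℕ → 𝒳) (y : ℕ → Bool), RealizableSeq ℋ x y → (Mistakes S x y).Finite) ∧
      (HasInfiniteLittlestoneTree ℋ →
        ∃ A : List Bool → 𝒳, ∀ yhat : ℕ → Bool,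
          RealizableSeq ℋ (fun t => A (List.ofFn fun i : Fin t => yhat i)) (fun t => !yhat t)) ∧
      (OnlineLearnable ℋ ↔ ¬ HasInfiniteLittlestoneTree ℋ) := by
  have part1 : ¬ HasInfiniteLittlestoneTree ℋ →
      ∃ S : List (𝒳 × Bool) → 𝒳 → Bool,
        ∀ (x : ℕ → 𝒳) (y : ℕ → Bool), RealizableSeq ℋ x y → (Mistakes S x y).Finite := by
    intro hnt
    have hne : Nonempty (OLD31.NITt ℋ) := by
      by_contra h
      exact hnt (OLD31.hasTree_of_not h)
    obtain ⟨T₀⟩ := hne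
    refine ⟨fun hist a => OLD31.predSt (hist.foldl OLD31.stepSt ⟨ℋ, T₀⟩) a, ?_⟩
    intro x y hr
    have hnee : ∀ t, (OLD31.stateAt ⟨ℋ, T₀⟩ x y t).1.Nonempty := by
      intro t
      obtain ⟨h, hh, hcons⟩ := hr t
      exact ⟨h, OLD31.mem_stateAt ⟨ℋ, T₀⟩ x y hh t fun s hs => hcons s (le_of_lt hs)⟩
    have hf := OLD31.fin_aux ⟨ℋ, T₀⟩ x y hnee ℋ T₀ 0 rfl
    refine hf.subset ?_
    intro t ht
    exact ⟨Nat.zero_le t, ht⟩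
  have part2 : HasInfiniteLittlestoneTree ℋ →
      ∃ A : List Bool → 𝒳, ∀ yhat : ℕ → Bool,
        RealizableSeq ℋ (fun t => A (List.ofFn fun i : Fin t => yhat i)) (fun t => !yhat t) := by
    rintro ⟨x0, hx0⟩
    refine ⟨fun u => x0 (u.map fun b => !b), ?_⟩
    intro yhat T
    obtain ⟨h, hh, hcons⟩ := hx0 (fun t => !yhat t) T
    refine ⟨h, hh, fun t ht => ?_⟩
    have := hcons t ht
    simpa [List.map_ofFn, Function.comp_def] using this
  refine ⟨part1, part2, ?_, part1⟩
  rintro ⟨S, hS⟩ htree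
  obtain ⟨A, hA⟩ := part2 htree
  have hr := hA (OLD31.yh S A)
  have hfin := hS _ _ hr
  have huniv : Mistakes S (fun t => A (List.ofFn fun i : Fin t => OLD31.yh S A i))
      (fun t => !(OLD31.yh S A t)) = Set.univ := by
    ext t
    simp only [Mistakes, Set.mem_setOf_eq, Set.mem_univ, iff_true]
    have h1 := (OLD31.runSeq_spec S A t).1
    have h2 := (OLD31.runSeq_spec S A t).2
    rw [← h2, ← h1]
    show OLD31.yh S A t ≠ !(OLD31.yh S A t)
    simp
  rw [huniv] at hfin
  exact Set.infinite_univ hfin
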